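/- Let N ≥ 2, β ∈ (0,N), λ > 0, and let u(x) = log( ((N/(N−1))^{N−1} (N−β)^N λ^N) / (1 + λ^{N/(N−1)} |x|^{(N−β)/(N−1)})^N ) for x ∈ ℝ^N \ {0}. Then ∫_{ℝ^N} |x|^{−β} e^{u(x)} dx = N · (N(N−β)/(N−1))^{N−1} · ω_N, where ω_N is the Lebesgue measure of the Euclidean unit ball in ℝ^N. -/

import Mathlib

open MeasureTheory Real Set Filter Topology

section aux

variable (N : ℕ) (β lam : ℝ)

private lemma radial_aux (hN : 2 ≤ N) (hβ : 0 < β) (hβN : β < N) (hlam : 0 < lam) :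
    ∫ y in Ioi (0:ℝ), y ^ (N-1) *
      (y ^ (-β) * ((((N:ℝ)/(N-1))^(N-1) * ((N:ℝ)-β)^N * lam^N) /
        (1 + lam ^ ((N:ℝ)/(N-1)) * y ^ (((N:ℝ)-β)/(N-1)))^N)) =
    ((N:ℝ)/(N-1))^(N-1) * ((N:ℝ)-β)^(N-1) := by
  have hn2 : (2:ℝ) ≤ (N:ℝ) := by exact_mod_cast hN
  have hn1 : (0:ℝ) < (N:ℝ) - 1 := by linarith
  have hnβ : (0:ℝ) < (N:ℝ) - β := by linarith
  set n : ℝ := (N:ℝ) with hn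
  set a : ℝ := n/(n-1) with hadef
  set b : ℝ := (n - β)/(n-1) with hbdef
  have hb : 0 < b := div_pos hnβ hn1
  set m : ℝ := lam ^ a with hmdef
  have hm : 0 < m := rpow_pos_of_pos hlam a
  set C : ℝ := (n/(n-1))^(N-1) * (n-β)^N * lam^N with hCdef
  set K : ℝ := (n/(n-1))^(N-1) * (n-β)^(N-1) with hKdef
  set G : ℝ → ℝ := fun r => K * (m * r^b / (1 + m * r^b))^(N-1) with hGdef
  have hq : ∀ r : ℝ, 0 ≤ r → 0 < 1 + m * r^b := fun r hr => by
    have := rpow_nonneg hr b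
    nlinarith
  -- casts
  have hcast1 : ((N-1 : ℕ) : ℝ) = n - 1 := by
    rw [Nat.cast_sub (by omega)]; simp [hn]
  have hcast2 : ((N-2 : ℕ) : ℝ) = n - 2 := by
    rw [Nat.cast_sub hN]; simp [hn]
  -- lam powers
  have hm2 : m ^ (N-1) = lam ^ N := by
    rw [hmdef, ← rpow_natCast (lam ^ a) (N-1), ← rpow_mul hlam.le, hcast1]
    have h : a * (n - 1) = n := by rw [hadef, div_mul_cancel₀ _ hn1.ne']
    rw [h, hn, rpow_natCast]
  have hbn : b * (n - 1) = n - β := by rw [hbdef, div_mul_cancel₀ _ hn1.ne']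
  -- the derivative identity
  have key : ∀ r ∈ Ioi (0:ℝ), HasDerivAt G
      (r ^ (N-1) * (r ^ (-β) * (C / (1 + m * r^b)^N))) r := by
    intro r hr
    have hr0 : 0 < r := hr
    have hrb : HasDerivAt (fun s : ℝ => s ^ b) (b * r ^ (b-1)) r :=
      Real.hasDerivAt_rpow_const (Or.inl hr0.ne')
    have hnum : HasDerivAt (fun s : ℝ => m * s ^ b) (m * (b * r ^ (b-1))) r := hrb.const_mul m
    have hden : HasDerivAt (fun s : ℝ => 1 + m * s ^ b) (m * (b * r ^ (b-1))) r :=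
      hnum.const_add 1
    have hqr := hq r hr0.le
    have hdiv : HasDerivAt (fun s : ℝ => m * s ^ b / (1 + m * s ^ b))
        ((m * (b * r ^ (b-1)) * (1 + m * r^b) - m * r^b * (m * (b * r ^ (b-1)))) /
          (1 + m * r^b)^2) r := hnum.div hden hqr.ne'
    have hG' := (hdiv.pow (N-1)).const_mul K
    convert hG' using 1
    case e'_4 => rfl
    case e'_5 => rfl
    case e'_8 => rfl
    have hDnum : m * (b * r ^ (b-1)) * (1 + m * r^b) - m * r^b * (m * (b * r ^ (b-1)))
        = m * b * r^(b-1) := by ring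
    rw [hDnum, show N - 1 - 1 = N - 2 from by omega]
    -- main power identity
    have hrpow1 : (r ^ b) ^ (N-2) = r ^ (b * (n-2)) := by
      rw [← rpow_natCast (r ^ b) (N-2), ← rpow_mul hr0.le, hcast2]
    have hrpow2 : (r:ℝ) ^ (N-1) = r ^ (n-1) := by
      rw [← rpow_natCast r (N-1), hcast1]
    have hexp : b * (n-2) + (b-1) = (n-1) + (-β) := by linarith [hbn]
    have hqNe : ((1 + m * r^b)^(N-2) * (1 + m * r^b)^2) = (1 + m * r^b)^N := by
      rw [← pow_add]; congr 1; omega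
    have hmain : (r:ℝ) ^ (N-1) * r ^ (-β) * C
        = K * (n-1) * ((m * r^b)^(N-2)) * (m * b * r^(b-1)) := by
      have hCK : C = K * (n-1) * b * (lam ^ N) := by
        have hNpow : (n-β)^N = (n-β)^(N-1) * (n-β) := by
          rw [← pow_succ]; congr 1; omega
        rw [hCdef, hKdef, hNpow, hbdef]
        field_simp
      rw [mul_pow, hrpow1, hrpow2, ← rpow_add hr0, hCK, ← hm2]
      have hre : r ^ ((n-1) + (-β)) = r ^ (b*(n-2)) * r ^ (b-1) := by
        rw [← rpow_add hr0, hexp]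
      rw [hre, show m ^ (N-1) = m ^ (N-2) * m from by rw [← pow_succ]; congr 1; omega]
      ring
    rw [hcast1]
    rw [div_pow, mul_pow]
    have hmain' : r ^ (N-1) * (r ^ (-β) * C)
        = K * ((n-1) * (m ^ (N-2) * (r^b)^(N-2)) * (m * b * r ^ (b-1))) := by
      rw [show r ^ (N-1) * (r ^ (-β) * C) = r ^ (N-1) * r ^ (-β) * C from by ring, hmain,
        mul_pow]
      ring
    field_simp
    rw [mul_assoc _ ((1 + m * r ^ b) ^ 2), mul_comm ((1 + m * r ^ b) ^ 2), hqNe]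
    linear_combination ((1 + m * r^b)^N) * hmain'
  -- nonnegativity of the integrand
  have hpos : ∀ r ∈ Ioi (0:ℝ),
      0 ≤ r ^ (N-1) * (r ^ (-β) * (C / (1 + m * r^b)^N)) := by
    intro r hr
    have hr0 : 0 < r := hr
    have hqr := hq r hr0.le
    have hC : 0 < C := by
      rw [hCdef]
      have h1 : 0 < n/(n-1) := by positivity
      positivity
    positivity
  -- limit at infinity
  have hlim : Tendsto G atTop (𝓝 K) := by
    have h1 : Tendsto (fun r:ℝ => 1 + m*r^b) atTop atTop :=
      tendsto_atTop_add_const_left _ 1 ((tendsto_rpow_atTop hb).const_mul_atTop hm)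
    have h2 : Tendsto (fun r:ℝ => m*r^b/(1+m*r^b)) atTop (𝓝 1) := by
      have h3 : Tendsto (fun r:ℝ => 1 - (1+m*r^b)⁻¹) atTop (𝓝 (1 - 0)) :=
        tendsto_const_nhds.sub h1.inv_tendsto_atTop
      rw [sub_zero] at h3
      refine h3.congr' ?_
      filter_upwards [eventually_ge_atTop (0:ℝ)] with r hr
      have hne := (hq r hr).ne'
      field_simp
      ring
    have h4 := (h2.pow (N-1)).const_mul K
    simpa using h4
  -- continuity at 0 from the right
  have hcont : ContinuousWithinAt G (Ici 0) 0 := by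
    have h0 : ContinuousWithinAt (fun r:ℝ => r ^ b) (Ici 0) 0 :=
      (Real.continuousAt_rpow_const 0 b (Or.inr hb.le)).continuousWithinAt
    have hq0 : (1 + m * (0:ℝ)^b) ≠ 0 := (hq 0 le_rfl).ne'
    have h1 : ContinuousWithinAt (fun r:ℝ => m * r ^ b) (Ici 0) 0 := h0.const_mul m
    have h2 : ContinuousWithinAt (fun r:ℝ => 1 + m * r ^ b) (Ici 0) 0 :=
      continuousWithinAt_const.add h1
    exact continuousWithinAt_const.mul ((h1.div h2 hq0).pow (N-1))
  have hG0 : G 0 = 0 := by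
    simp [hGdef, Real.zero_rpow hb.ne', zero_pow (show N - 1 ≠ 0 from by omega)]
  have := integral_Ioi_of_hasDerivAt_of_nonneg hcont key hpos hlim
  rw [hG0, sub_zero] at this
  exact this

end aux

theorem stmt11 (N : ℕ) (hN : 2 ≤ N) (β lam : ℝ) (hβ : 0 < β) (hβN : β < N)
    (hlam : 0 < lam) (u : EuclideanSpace ℝ (Fin N) → ℝ)
    (hu : ∀ x : EuclideanSpace ℝ (Fin N),
      u x = Real.log ((((N : ℝ) / (N - 1)) ^ (N - 1) * ((N : ℝ) - β) ^ N * lam ^ N) /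
        (1 + lam ^ ((N : ℝ) / (N - 1)) * ‖x‖ ^ (((N : ℝ) - β) / (N - 1))) ^ N)) :
    ∫ x : EuclideanSpace ℝ (Fin N), ‖x‖ ^ (-β) * Real.exp (u x) =
      N * ((N : ℝ) * ((N : ℝ) - β) / (N - 1)) ^ (N - 1) *
        (volume (Metric.ball (0 : EuclideanSpace ℝ (Fin N)) 1)).toReal := by
  have hn2 : (2:ℝ) ≤ (N:ℝ) := by exact_mod_cast hN
  have hn1 : (0:ℝ) < (N:ℝ) - 1 := by linarith
  have hnβ : (0:ℝ) < (N:ℝ) - β := by linarith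
  haveI : NeZero N := ⟨by omega⟩
  set f : ℝ → ℝ := fun t => t ^ (-β) *
      ((((N:ℝ)/(N-1))^(N-1) * ((N:ℝ)-β)^N * lam^N) /
        (1 + lam ^ ((N:ℝ)/(N-1)) * t ^ (((N:ℝ)-β)/(N-1)))^N) with hfdef
  have hrw : ∀ x : EuclideanSpace ℝ (Fin N),
      ‖x‖ ^ (-β) * Real.exp (u x) = f ‖x‖ := by
    intro x
    rw [hu x, hfdef]
    have hm : (0:ℝ) < lam ^ ((N:ℝ)/(N-1)) := rpow_pos_of_pos hlam _
    have hden : (0:ℝ) < 1 + lam ^ ((N:ℝ)/(N-1)) * ‖x‖ ^ (((N:ℝ)-β)/(N-1)) := by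
      have := rpow_nonneg (norm_nonneg x) (((N:ℝ)-β)/(N-1))
      nlinarith
    have hC : (0:ℝ) < ((N:ℝ)/(N-1))^(N-1) * ((N:ℝ)-β)^N * lam^N := by
      have h1 : 0 < (N:ℝ)/((N:ℝ)-1) := by positivity
      positivity
    rw [Real.exp_log (by positivity)]
  rw [MeasureTheory.integral_congr_ae (ae_of_all _ hrw),
    integral_fun_norm_addHaar volume f, finrank_euclideanSpace_fin]
  simp only [smul_eq_mul, nsmul_eq_mul]
  have hrad := radial_aux N β lam hN hβ hβN hlam
  rw [hfdef]
  rw [hrad]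
  rw [show (N:ℝ) * ((N:ℝ)-β) / ((N:ℝ)-1) = ((N:ℝ)/((N:ℝ)-1)) * ((N:ℝ)-β) from by ring,
    mul_pow]
  rw [measureReal_def]
  ring
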